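/- Let p be an odd prime, let n = p², and let G be the cyclic subgroup of (Z_n)^× generated by the unit e = p − 1. Then for every α ∈ Z_n, the cardinality of the coset αG = {α·g : g ∈ G} equals 1 if α = 0, equals 2 if α ≠ 0 and p divides α, and equals 2p if p does not divide α. -/

import Mathlib

/-- The coset (orbit) `xG = {x * g : g ∈ G}` of `x : R` under a subgroup `G` of `Rˣ`. -/
def coset {R : Type*} [Monoid R] (G : Subgroup Rˣ) (x : R) : Set R :=
  {y | ∃ g ∈ G, y = x * (g : R)}

private lemma one_add_pow_aux {R : Type*} [CommRing R] {x : R} (hx : x ^ 2 = 0) :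
    ∀ n : ℕ, (1 + x) ^ n = 1 + n * x := by
  intro n
  induction n with
  | zero => simp
  | succ n ih =>
    rw [pow_succ, ih]
    push_cast
    linear_combination (n : R) * hx

theorem stmt_9 (p : ℕ) (hp : p.Prime) (hodd : p ≠ 2) (e : (ZMod (p ^ 2))ˣ)
    (he : (e : ZMod (p ^ 2)) = (p : ZMod (p ^ 2)) - 1) :
    ∀ α : ZMod (p ^ 2),
      (α = 0 → (coset (Subgroup.zpowers e) α).ncard = 1) ∧
      (α ≠ 0 → (p : ZMod (p ^ 2)) ∣ α → (coset (Subgroup.zpowers e) α).ncard = 2) ∧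
      (¬ (p : ZMod (p ^ 2)) ∣ α → (coset (Subgroup.zpowers e) α).ncard = 2 * p) := by
  haveI : NeZero (p ^ 2) := ⟨pow_ne_zero 2 hp.pos.ne'⟩
  have hpodd : Odd p := hp.odd_of_ne_two hodd
  have hsq : (p : ZMod (p ^ 2)) ^ 2 = 0 := by
    have h := ZMod.natCast_self (p ^ 2)
    push_cast at h
    exact h
  have h2p : (2 * p : ZMod (p ^ 2)) ≠ 0 := by
    intro h
    have h' : (((2 * p : ℕ)) : ZMod (p ^ 2)) = 0 := by push_cast; exact h
    rw [ZMod.natCast_eq_zero_iff] at h'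
    rw [pow_two, mul_comm 2 p] at h'
    have hpd : p ∣ 2 := (Nat.mul_dvd_mul_iff_left hp.pos).mp h'
    exact hodd ((Nat.prime_dvd_prime_iff_eq hp Nat.prime_two).mp hpd)
  -- powers of e
  have hxp : (e : ZMod (p ^ 2)) ^ p = -1 := by
    have hneg : (-(p : ZMod (p ^ 2))) ^ 2 = 0 := by rw [neg_sq]; exact hsq
    have h1 : ((1 : ZMod (p ^ 2)) + (-(p : ZMod (p ^ 2)))) ^ p = 1 := by
      rw [one_add_pow_aux hneg p]
      linear_combination -hsq
    have h2 : (e : ZMod (p ^ 2)) = -(1 + (-(p : ZMod (p ^ 2)))) := by rw [he]; ring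
    rw [h2, hpodd.neg_pow, h1]
  have hx2 : (e : ZMod (p ^ 2)) ^ 2 ≠ 1 := by
    intro h
    rw [he] at h
    exact h2p (by linear_combination hsq - h)
  have hxpne : (e : ZMod (p ^ 2)) ^ p ≠ 1 := by
    rw [hxp]
    intro h
    exact h2p (by linear_combination -(p : ZMod (p ^ 2)) * h)
  have hepow : e ^ (2 * p) = 1 := by
    apply Units.ext
    rw [Units.val_pow_eq_pow_val, mul_comm, pow_mul, hxp]
    simp
  have hord : orderOf e = 2 * p := by
    have hd : orderOf e ∣ 2 * p := orderOf_dvd_iff_pow_eq_one.mpr hepow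
    have huc : ∀ k : ℕ, e ^ k = 1 → (e : ZMod (p ^ 2)) ^ k = 1 := by
      intro k hk
      have := congrArg Units.val hk
      rwa [Units.val_pow_eq_pow_val, Units.val_one] at this
    by_cases hpd : p ∣ orderOf e
    · obtain ⟨m, hm⟩ := hpd
      have hm2 : m ∣ 2 := by
        rw [hm, mul_comm 2 p] at hd
        exact (Nat.mul_dvd_mul_iff_left hp.pos).mp hd
      rcases (Nat.prime_two.eq_one_or_self_of_dvd m hm2).symm with h1 | h1
      · rw [hm, h1, mul_comm]
      · exfalso
        apply hxpne
        apply huc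
        apply orderOf_dvd_iff_pow_eq_one.mp
        rw [hm, h1, mul_one]
    · exfalso
      apply hx2
      apply huc
      apply orderOf_dvd_iff_pow_eq_one.mp
      have hcop : Nat.Coprime (orderOf e) p :=
        ((hp.coprime_iff_not_dvd).mpr hpd).symm
      exact hcop.dvd_of_dvd_mul_right hd
  intro α
  refine ⟨?_, ?_, ?_⟩
  · -- α = 0
    intro h0
    have hset : coset (Subgroup.zpowers e) α = {0} := by
      ext y
      simp only [coset, Set.mem_setOf_eq, Set.mem_singleton_iff]
      constructor
      · rintro ⟨g, -, rfl⟩; rw [h0, zero_mul]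
      · rintro rfl; exact ⟨1, Subgroup.one_mem _, by rw [h0, zero_mul]⟩
    rw [hset, Set.ncard_singleton]
  · -- α ≠ 0, p ∣ α
    intro hα0 hdvd
    obtain ⟨c, hc⟩ := hdvd
    have hαp : α * (p : ZMod (p ^ 2)) = 0 := by rw [hc]; linear_combination c * hsq
    have hαe : α * (e : ZMod (p ^ 2)) = -α := by rw [he]; linear_combination hαp
    have hαei : α * ((e⁻¹ : (ZMod (p ^ 2))ˣ) : ZMod (p ^ 2)) = -α := by
      have h1 : ((e : ZMod (p ^ 2)) * ((e⁻¹ : (ZMod (p ^ 2))ˣ) : ZMod (p ^ 2))) = 1 :=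
        e.mul_inv
      calc α * ((e⁻¹ : (ZMod (p ^ 2))ˣ) : ZMod (p ^ 2))
          = (-(α * (e : ZMod (p ^ 2)))) * ((e⁻¹ : (ZMod (p ^ 2))ˣ) : ZMod (p ^ 2)) := by
            rw [hαe]; ring
        _ = -(α * ((e : ZMod (p ^ 2)) * ((e⁻¹ : (ZMod (p ^ 2))ˣ) : ZMod (p ^ 2)))) := by ring
        _ = -α := by rw [h1, mul_one]
    have key : ∀ k : ℤ, α * ((e ^ k : (ZMod (p ^ 2))ˣ) : ZMod (p ^ 2)) = α ∨
        α * ((e ^ k : (ZMod (p ^ 2))ˣ) : ZMod (p ^ 2)) = -α := by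
      intro k
      induction k using Int.induction_on with
      | zero => left; simp
      | succ k ih =>
        rw [zpow_add_one, Units.val_mul, ← mul_assoc]
        rcases ih with h | h
        · right; rw [h, hαe]
        · left; rw [h]; linear_combination -hαe
      | pred k ih =>
        rw [zpow_sub_one, Units.val_mul, ← mul_assoc]
        rcases ih with h | h
        · right; rw [h, hαei]
        · left; rw [h]; linear_combination -hαei
    have hne : α ≠ -α := by
      intro h
      apply hα0
      have h2 : (2 : ZMod (p ^ 2)) * α = 0 := by linear_combination h
      have hu2 : IsUnit (2 : ZMod (p ^ 2)) := by
        have hcop : Nat.Coprime 2 (p ^ 2) := by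
          rw [Nat.prime_two.coprime_iff_not_dvd]
          intro h2d
          have h2d' := Nat.Prime.dvd_of_dvd_pow Nat.prime_two h2d
          exact hodd ((Nat.prime_dvd_prime_iff_eq Nat.prime_two hp).mp h2d').symm
        have := (ZMod.isUnit_iff_coprime 2 (p ^ 2)).mpr hcop
        simpa using this
      exact hu2.mul_left_cancel (by rw [h2, mul_zero])
    have hset : coset (Subgroup.zpowers e) α = {α, -α} := by
      ext y
      simp only [coset, Set.mem_setOf_eq, Set.mem_insert_iff, Set.mem_singleton_iff]
      constructor
      · rintro ⟨g, hg, rfl⟩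
        obtain ⟨k, rfl⟩ := Subgroup.mem_zpowers_iff.mp hg
        exact key k
      · rintro (rfl | rfl)
        · exact ⟨1, Subgroup.one_mem _, by simp⟩
        · exact ⟨e, Subgroup.mem_zpowers e, hαe.symm⟩
    rw [hset, Set.ncard_pair hne]
  · -- p ∤ α
    intro hndvd
    have hval : ((α.val : ℕ) : ZMod (p ^ 2)) = α := by
      rw [ZMod.natCast_val, ZMod.cast_id]
    have hu : IsUnit α := by
      by_contra hnu
      apply hndvd
      have hpv : p ∣ α.val := by
        by_contra hpv
        have hcop : Nat.Coprime α.val (p ^ 2) :=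
          (((hp.coprime_iff_not_dvd).mpr hpv).symm).pow_right 2
        exact hnu (hval ▸ (ZMod.isUnit_iff_coprime _ _).mpr hcop)
      obtain ⟨c, hc⟩ := hpv
      exact ⟨(c : ZMod (p ^ 2)), by rw [← hval, hc]; push_cast; ring⟩
    have hset : coset (Subgroup.zpowers e) α =
        (fun y => α * y) '' (Units.val '' ((Subgroup.zpowers e : Subgroup (ZMod (p ^ 2))ˣ) :
          Set (ZMod (p ^ 2))ˣ)) := by
      ext y
      simp only [coset, Set.mem_setOf_eq, Set.mem_image]
      constructor
      · rintro ⟨g, hg, rfl⟩; exact ⟨g, ⟨g, hg, rfl⟩, rfl⟩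
      · rintro ⟨_, ⟨g, hg, rfl⟩, rfl⟩; exact ⟨g, hg, rfl⟩
    rw [hset, Set.ncard_image_of_injective _ (fun a b hab => hu.mul_left_cancel hab),
      Set.ncard_image_of_injective _ (fun a b h => Units.ext h), ← Nat.card_coe_set_eq,
      SetLike.coe_sort_coe, Nat.card_zpowers, hord]
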